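/- Let r : ℕ → ℝ be a nondecreasing function, regularly varying of positive index ρ (i.e., for all λ > 0, r(⌊λ n⌋)/r(n) → λ^ρ as n → ∞) with r(n) → ∞. Then limsup_{k → ∞} (∑_{n ≥ k} e^{-r(n)}) / (k e^{-r(k)}) ≤ 1. -/

import Mathlib

open Filter Asymptotics

lemma auxStmt0_lin_le_pow (l : ℝ) (hl : 1 < l) (a b : ℝ) :
    ∀ᶠ j : ℕ in atTop, a + b * j ≤ l ^ j := by
  have h1 : (fun j : ℕ => (j : ℝ)) =o[atTop] fun j => l ^ j := by
    simpa using isLittleO_pow_const_const_pow_of_one_lt (R := ℝ) 1 hl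
  have h0 : (fun _ : ℕ => (1 : ℝ)) =o[atTop] fun j => l ^ j := by
    simpa using isLittleO_pow_const_const_pow_of_one_lt (R := ℝ) 0 hl
  have h : (fun j : ℕ => a + b * j) =o[atTop] fun j => l ^ j := by
    simpa using (h0.const_mul_left a).add (h1.const_mul_left b)
  filter_upwards [h.bound zero_lt_one] with j hj
  have hlj : (0:ℝ) < l ^ j := pow_pos (lt_trans one_pos hl) j
  calc a + b * j ≤ |a + b * j| := le_abs_self _
    _ ≤ 1 * |l ^ j| := by simpa [Real.norm_eq_abs] using hj
    _ = l ^ j := by rw [one_mul, abs_of_pos hlj]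

lemma auxStmt0_log_growth (r : ℕ → ℝ) (hmono : Monotone r) (l : ℝ) (hl : 1 < l)
    (N : ℕ) (hN : 1 ≤ N) (hN1 : ∀ m, N ≤ m → l * r m ≤ r (2 * m)) (hN2 : 1 ≤ r N)
    (A : ℝ) :
    ∀ᶠ n : ℕ in atTop, A * Real.log n ≤ r n := by
  have hl0 : (0:ℝ) < l := lt_trans one_pos hl
  -- key induction
  have key : ∀ j : ℕ, ∀ k : ℕ, 2 ^ j * N ≤ k → l ^ j ≤ r k := by
    intro j
    induction j with
    | zero => intro k hk; simpa using le_trans hN2 (hmono (by simpa using hk))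
    | succ j ih =>
      intro k hk
      have hm : 2 ^ j * N ≤ k / 2 := by
        rw [Nat.le_div_iff_mul_le (by norm_num)]
        calc 2 ^ j * N * 2 = 2 ^ (j+1) * N := by ring
          _ ≤ k := hk
      have hmN : N ≤ k / 2 := le_trans (Nat.le_mul_of_pos_left N (by positivity)) hm
      have h1 : l * r (k / 2) ≤ r (2 * (k / 2)) := hN1 _ hmN
      have h2 : r (2 * (k / 2)) ≤ r k := hmono (Nat.mul_div_le k 2)
      have h3 : l ^ j ≤ r (k / 2) := ih _ hm
      calc l ^ (j + 1) = l * l ^ j := by ring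
        _ ≤ l * r (k / 2) := by
            exact mul_le_mul_of_nonneg_left h3 hl0.le
        _ ≤ r k := le_trans h1 h2
  -- upper bound on k in terms of j
  have hub : ∀ k : ℕ, N ≤ k → (k : ℝ) ≤ (N : ℝ) * 2 ^ (Nat.log 2 (k / N) + 2) := by
    intro k hk
    have hkN : k / N ≠ 0 := by
      have := Nat.one_le_div_iff (Nat.lt_of_lt_of_le Nat.zero_lt_one hN) |>.mpr hk
      omega
    have h1 : k / N < 2 ^ (Nat.log 2 (k / N) + 1) := Nat.lt_pow_succ_log_self (by norm_num) _
    have h2 : k < N * 2 ^ (Nat.log 2 (k / N) + 2) := by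
      have e := Nat.div_add_mod k N
      have hm : k % N < N := Nat.mod_lt k (by omega)
      calc k = N * (k / N) + k % N := e.symm
        _ < N * (k / N + 1) := by
            have : N * (k / N + 1) = N * (k / N) + N := by ring
            omega
        _ ≤ N * 2 ^ (Nat.log 2 (k / N) + 1) := Nat.mul_le_mul_left N (by omega)
        _ ≤ N * 2 ^ (Nat.log 2 (k / N) + 2) := Nat.mul_le_mul_left N
            (Nat.pow_le_pow_right (by norm_num) (by omega))
    exact_mod_cast h2.le
  -- lower bound: 2 ^ j * N ≤ k for j = Nat.log 2 (k / N)
  have hlb : ∀ k : ℕ, N ≤ k → 2 ^ (Nat.log 2 (k / N)) * N ≤ k := by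
    intro k hk
    have hkN : k / N ≠ 0 := by
      have := (Nat.one_le_div_iff (Nat.lt_of_lt_of_le Nat.zero_lt_one hN)).mpr hk
      omega
    calc 2 ^ (Nat.log 2 (k / N)) * N ≤ (k / N) * N :=
          Nat.mul_le_mul_right N (Nat.pow_log_le_self 2 hkN)
      _ ≤ k := Nat.div_mul_le_self k N
  -- j(k) tends to infinity
  have htend : Tendsto (fun k : ℕ => Nat.log 2 (k / N)) atTop atTop := by
    refine tendsto_atTop.mpr fun J => ?_
    filter_upwards [eventually_ge_atTop (2 ^ J * N)] with k hk
    have hdiv : 2 ^ J ≤ k / N := (Nat.le_div_iff_mul_le (by omega)).mpr hk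
    have : k / N ≠ 0 := by
      have := Nat.one_le_two_pow (n := J); omega
    exact (Nat.le_log_iff_pow_le (by norm_num) this).mpr hdiv
  -- linear bound
  have hlin : ∀ᶠ j : ℕ in atTop,
      A * (Real.log N + 2 * Real.log 2) + (A * Real.log 2) * j ≤ l ^ j :=
    auxStmt0_lin_le_pow l hl _ _
  filter_upwards [eventually_ge_atTop N, eventually_ge_atTop 1, htend.eventually hlin]
    with k hk hk1 hjk
  set j := Nat.log 2 (k / N) with hj
  have hlogk : Real.log k ≤ Real.log N + (j + 2) * Real.log 2 := by
    have h1 : Real.log k ≤ Real.log ((N : ℝ) * 2 ^ (j + 2)) := by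
      apply Real.log_le_log (by exact_mod_cast hk1) (hub k hk)
    have h2 : Real.log ((N : ℝ) * 2 ^ (j + 2)) = Real.log N + (j + 2) * Real.log 2 := by
      rw [Real.log_mul (by positivity) (by positivity), Real.log_pow]
      push_cast; ring
    linarith [h1, h2.le]
  have hAk : A * Real.log k ≤ l ^ j := by
    rcases le_or_gt A 0 with hA | hA
    · have hlogpos : 0 ≤ Real.log k := Real.log_nonneg (by exact_mod_cast hk1)
      have : A * Real.log k ≤ 0 := mul_nonpos_of_nonpos_of_nonneg hA hlogpos
      exact this.trans (pow_pos (lt_trans one_pos hl) j).le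
    · calc A * Real.log k ≤ A * (Real.log N + (j + 2) * Real.log 2) :=
            mul_le_mul_of_nonneg_left hlogk hA.le
        _ = A * (Real.log N + 2 * Real.log 2) + (A * Real.log 2) * j := by ring
        _ ≤ l ^ j := hjk
  exact hAk.trans (key j k (hlb k hk))

lemma auxStmt0_summable (r : ℕ → ℝ) (c : ℝ) (hc : 0 < c)
    (hlog : ∀ᶠ n : ℕ in atTop, (2 / c) * Real.log n ≤ r n) :
    Summable fun n : ℕ => Real.exp (-(c * r n)) := by
  have hmaj : ∀ᶠ n : ℕ in atTop, Real.exp (-(c * r n)) ≤ ((n : ℝ) ^ 2)⁻¹ := by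
    filter_upwards [hlog, eventually_ge_atTop 1] with n hn hn1
    have hnpos : (0:ℝ) < n := by exact_mod_cast hn1
    have h1 : 2 * Real.log n ≤ c * r n := by
      have := mul_le_mul_of_nonneg_left hn hc.le
      rw [mul_comm c ((2/c) * Real.log n)] at this
      calc 2 * Real.log n = 2 / c * Real.log n * c := by field_simp
        _ ≤ c * r n := by rw [mul_comm] at this ⊢; linarith [this]
    calc Real.exp (-(c * r n)) ≤ Real.exp (-(2 * Real.log n)) := by
          exact Real.exp_le_exp.mpr (by linarith)
      _ = ((n : ℝ) ^ 2)⁻¹ := by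
          rw [show (2:ℝ) * Real.log n = Real.log ((n:ℝ) ^ 2) by
              rw [Real.log_pow]; push_cast; ring,
            Real.exp_neg, Real.exp_log (by positivity)]
  have hsum : Summable fun n : ℕ => ((n : ℝ) ^ 2)⁻¹ :=
    Real.summable_nat_pow_inv.mpr one_lt_two
  apply summable_of_isBigO_nat hsum
  apply IsBigO.of_bound 1
  filter_upwards [hmaj, eventually_ge_atTop 1] with n hn hn1
  have hnpos : (0:ℝ) < n := by exact_mod_cast hn1
  rw [Real.norm_eq_abs, Real.norm_eq_abs, abs_of_pos (Real.exp_pos _),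
    abs_of_pos (by positivity)]
  linarith

/-- If `r : ℕ → ℝ` is nondecreasing, regularly varying of positive index `ρ`
and tends to infinity, then `∑_{n ≥ k} e^{-r n} ≲ k e^{-r k}`. -/
theorem stmt0 (r : ℕ → ℝ) (ρ : ℝ) (hρ : 0 < ρ)
    (hmono : Monotone r)
    (hRV : ∀ l : ℝ, 0 < l →
      Tendsto (fun n : ℕ => r ⌊l * n⌋₊ / r n) atTop (nhds (l ^ ρ)))
    (hinf : Tendsto r atTop atTop) :
    limsup (fun k : ℕ =>
        (∑' n : ℕ, Real.exp (-r (k + n))) / (k * Real.exp (-r k))) atTop ≤ 1 := by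
  have h2ρ : 1 < (2:ℝ) ^ ρ :=
    (Real.one_lt_rpow_iff_of_pos two_pos).mpr (Or.inl ⟨one_lt_two, hρ⟩)
  set l : ℝ := (1 + (2:ℝ) ^ ρ) / 2 with hl_def
  have hl1 : 1 < l := by rw [hl_def]; linarith
  have hl2 : l < (2:ℝ) ^ ρ := by rw [hl_def]; linarith
  have hl0 : (0:ℝ) < l := lt_trans one_pos hl1
  have hRV2 : Tendsto (fun n : ℕ => r (2 * n) / r n) atTop (nhds ((2:ℝ) ^ ρ)) := by
    have h := hRV 2 two_pos
    apply h.congr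
    intro n
    have he : ((2:ℝ) * (n:ℝ)) = ((2 * n : ℕ) : ℝ) := by push_cast; ring
    rw [he, Nat.floor_natCast]
  have hev1 : ∀ᶠ n : ℕ in atTop, l * r n ≤ r (2 * n) := by
    filter_upwards [hRV2.eventually (eventually_gt_nhds hl2),
      hinf.eventually_gt_atTop 0] with n ha hb
    rw [lt_div_iff₀ hb] at ha
    linarith
  set θ : ℝ := l⁻¹ with hθ_def
  set c : ℝ := 1 - l⁻¹ with hc_def
  have hθ0 : 0 < θ := by rw [hθ_def]; positivity
  have hc0 : 0 < c := by
    rw [hc_def]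
    have : l⁻¹ < 1 := inv_lt_one_of_one_lt₀ hl1
    linarith
  have hθc : θ + c = 1 := by rw [hθ_def, hc_def]; ring
  obtain ⟨N0, hN0⟩ := eventually_atTop.mp (hev1.and (hinf.eventually_ge_atTop 1))
  set N := max N0 1 with hN_def
  have hN1 : ∀ m, N ≤ m → l * r m ≤ r (2 * m) := fun m hm =>
    (hN0 m (le_trans (le_max_left _ _) hm)).1
  have hNB : 1 ≤ r N := (hN0 N (le_max_left _ _)).2
  have hNone : 1 ≤ N := le_max_right _ _
  have hlog := auxStmt0_log_growth r hmono l hl1 N hNone hN1 hNB (2 / c)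
  have hsc : Summable fun n : ℕ => Real.exp (-(c * r n)) := auxStmt0_summable r c hc0 hlog
  have hdecomp : ∀ x : ℝ, Real.exp (-x) = Real.exp (-(θ * x)) * Real.exp (-(c * x)) := by
    intro x
    rw [← Real.exp_add, ← neg_add, ← add_mul, hθc, one_mul]
  have hs0 : Summable fun n : ℕ => Real.exp (-(r n)) := by
    apply Summable.of_nonneg_of_le (fun n => (Real.exp_pos _).le)
      (fun n => ?_) (hsc.mul_left (Real.exp (-(θ * r 0))))
    rw [hdecomp (r n)]
    apply mul_le_mul_of_nonneg_right _ (Real.exp_pos _).le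
    exact Real.exp_le_exp.mpr (by nlinarith [hmono (Nat.zero_le n), hθ0])
  have hsk : ∀ k : ℕ, Summable fun n : ℕ => Real.exp (-r (k + n)) := by
    intro k
    apply Summable.of_nonneg_of_le (fun n => (Real.exp_pos _).le) (fun n => ?_) hs0
    exact Real.exp_le_exp.mpr (neg_le_neg (hmono (Nat.le_add_left n k)))
  set C : ℝ := ∑' n : ℕ, Real.exp (-(c * r n)) with hC_def
  have hC0 : 0 ≤ C := tsum_nonneg fun n => (Real.exp_pos _).le
  have hmain : ∀ᶠ k : ℕ in atTop,
      (∑' n : ℕ, Real.exp (-r (k + n))) / (k * Real.exp (-r k)) ≤ 1 + C / k := by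
    filter_upwards [eventually_ge_atTop 1, hev1, hinf.eventually_ge_atTop 0] with k hk1 hk2 hk3
    have hkpos : (0:ℝ) < k := by exact_mod_cast hk1
    have hden : (0:ℝ) < k * Real.exp (-r k) := by positivity
    rw [div_le_iff₀ hden]
    have hsplit := Summable.sum_add_tsum_nat_add (f := fun n : ℕ => Real.exp (-r (k + n))) k (hsk k)
    have hpart1 : (∑ i ∈ Finset.range k, Real.exp (-r (k + i))) ≤ k * Real.exp (-r k) := by
      calc (∑ i ∈ Finset.range k, Real.exp (-r (k + i)))
          ≤ ∑ i ∈ Finset.range k, Real.exp (-r k) := by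
            apply Finset.sum_le_sum
            intro i _
            exact Real.exp_le_exp.mpr (neg_le_neg (hmono (Nat.le_add_right k i)))
        _ = k * Real.exp (-r k) := by
            rw [Finset.sum_const, Finset.card_range, nsmul_eq_mul]
    have hre : (fun n : ℕ => Real.exp (-r (k + (n + k))))
        = fun n : ℕ => Real.exp (-r (2 * k + n)) := by
      funext n; rw [show k + (n + k) = 2 * k + n by omega]
    have hs2k : Summable fun n : ℕ => Real.exp (-r (2 * k + n)) := hsk (2 * k)
    have hpart2 : (∑' n : ℕ, Real.exp (-r (k + (n + k)))) ≤ Real.exp (-r k) * C := by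
      rw [hre]
      have hpt : ∀ n : ℕ, Real.exp (-r (2 * k + n)) ≤
          Real.exp (-(θ * r (2 * k))) * Real.exp (-(c * r n)) := by
        intro n
        rw [hdecomp (r (2 * k + n))]
        apply mul_le_mul
        · exact Real.exp_le_exp.mpr (neg_le_neg
            (mul_le_mul_of_nonneg_left (hmono (Nat.le_add_right _ n)) hθ0.le))
        · exact Real.exp_le_exp.mpr (neg_le_neg
            (mul_le_mul_of_nonneg_left (hmono (Nat.le_add_left n _)) hc0.le))
        · exact (Real.exp_pos _).le
        · exact (Real.exp_pos _).le
      calc (∑' n : ℕ, Real.exp (-r (2 * k + n)))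
          ≤ ∑' n : ℕ, Real.exp (-(θ * r (2 * k))) * Real.exp (-(c * r n)) :=
            Summable.tsum_le_tsum hpt hs2k (hsc.mul_left _)
        _ = Real.exp (-(θ * r (2 * k))) * C := by rw [tsum_mul_left]
        _ ≤ Real.exp (-r k) * C := by
            apply mul_le_mul_of_nonneg_right _ hC0
            apply Real.exp_le_exp.mpr
            apply neg_le_neg
            have hmm := mul_le_mul_of_nonneg_left hk2 hθ0.le
            rw [hθ_def] at hmm ⊢
            calc r k = l⁻¹ * (l * r k) := by field_simp
              _ ≤ l⁻¹ * r (2 * k) := hmm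
    have htot : (∑' n : ℕ, Real.exp (-r (k + n)))
        ≤ k * Real.exp (-r k) + Real.exp (-r k) * C := by
      rw [← hsplit]
      exact add_le_add hpart1 hpart2
    calc (∑' n : ℕ, Real.exp (-r (k + n)))
        ≤ k * Real.exp (-r k) + Real.exp (-r k) * C := htot
      _ = (1 + C / k) * (k * Real.exp (-r k)) := by field_simp
  have hnn : ∀ k : ℕ, 0 ≤ (∑' n : ℕ, Real.exp (-r (k + n))) / (k * Real.exp (-r k)) := by
    intro k
    apply div_nonneg (tsum_nonneg fun n => (Real.exp_pos _).le) (by positivity)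
  have htends : Tendsto (fun k : ℕ => 1 + C / k) atTop (nhds 1) := by
    have := (tendsto_const_div_atTop_nhds_zero_nat C).const_add 1
    simpa using this
  calc limsup (fun k : ℕ =>
        (∑' n : ℕ, Real.exp (-r (k + n))) / (k * Real.exp (-r k))) atTop
      ≤ limsup (fun k : ℕ => 1 + C / k) atTop := by
        exact limsup_le_limsup hmain (isCoboundedUnder_le_of_le atTop hnn)
          htends.isBoundedUnder_le
    _ = 1 := htends.limsup_eq
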